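/- arXiv:1808.00250 — 6 statements merged into one kernel-verified Lean document; each statement's English description precedes it below -/
import Mathlib

section
/- Let X and Y be n×n complex matrices and define R₁(λ) = e^{−λY/2} e^{−λX/2} e^{λ(X+Y)} for real λ. Then R₁ is differentiable, each R₁(λ) is invertible, and R₁′(λ)·R₁(λ)⁻¹ = −Y/2 + e^{−λY/2} ( e^{−λX/2} Y e^{λX/2} + X/2 ) e^{λY/2} for all λ. -/
attribute [local instance] Matrix.linftyOpNormedAddCommGroup Matrix.linftyOpNormedRing
  Matrix.linftyOpNormedAlgebra Matrix.linftyOpNormedSpace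

open NormedSpace
private lemma exp_smul_hasDerivAt (m : ℕ) (M : Matrix (Fin m) (Fin m) ℂ)
    {f : ℝ → ℝ} {f' l : ℝ} (hf : HasDerivAt f f' l) :
    HasDerivAt (fun t : ℝ => exp (f t • M)) (f' • (exp (f l • M) * M)) l := by
  exact HasDerivAt.scomp (𝕜 := ℝ) (𝕜' := ℝ) l
    (hasDerivAt_exp_smul_const (𝕂 := ℝ) M (f l)) hf

private lemma real_smul_eq (m : ℕ) (r : ℝ) (M : Matrix (Fin m) (Fin m) ℂ) :
    r • M = (r : ℂ) • M := (algebraMap_smul ℂ r M).symm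

/-- For `R₁(λ) = e^{−λY/2} e^{−λX/2} e^{λ(X+Y)}`, `R₁` is differentiable, each `R₁(λ)` is
invertible, and `R₁′(λ)·R₁(λ)⁻¹ = −Y/2 + e^{−λY/2}(e^{−λX/2} Y e^{λX/2} + X/2) e^{λY/2}`. -/
theorem deriv_R_one_mul_inv (m : ℕ) (X Y : Matrix (Fin m) (Fin m) ℂ)
    (R₁ : ℝ → Matrix (Fin m) (Fin m) ℂ)
    (hR₁ : R₁ = fun l : ℝ =>
      NormedSpace.exp ((-(l / 2)) • Y) * NormedSpace.exp ((-(l / 2)) • X) *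
        NormedSpace.exp (l • (X + Y))) :
    Differentiable ℝ R₁ ∧
      ∀ l : ℝ, IsUnit (R₁ l) ∧
        deriv R₁ l * (R₁ l)⁻¹ =
          -((1 / 2 : ℂ) • Y) +
            NormedSpace.exp ((-(l / 2)) • Y) *
              (NormedSpace.exp ((-(l / 2)) • X) * Y * NormedSpace.exp ((l / 2) • X) +
                (1 / 2 : ℂ) • X) *
              NormedSpace.exp ((l / 2) • Y) := by
  have hf : ∀ l : ℝ, HasDerivAt (fun t : ℝ => -(t / 2)) (-(1 / 2 : ℝ)) l := fun l => by
    exact ((hasDerivAt_id l).div_const 2).neg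
  have hid : ∀ l : ℝ, HasDerivAt (fun t : ℝ => t) (1 : ℝ) l := fun l => hasDerivAt_id l
  have hD : ∀ l : ℝ, HasDerivAt R₁
      (((-(1 / 2 : ℝ)) • (exp ((-(l / 2)) • Y) * Y) * exp ((-(l / 2)) • X) +
          exp ((-(l / 2)) • Y) * ((-(1 / 2 : ℝ)) • (exp ((-(l / 2)) • X) * X))) *
            exp (l • (X + Y)) +
        exp ((-(l / 2)) • Y) * exp ((-(l / 2)) • X) *
          ((1 : ℝ) • (exp (l • (X + Y)) * (X + Y)))) l := by
    intro l
    rw [hR₁]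
    exact (((exp_smul_hasDerivAt m Y (hf l)).mul (exp_smul_hasDerivAt m X (hf l))).mul
      (exp_smul_hasDerivAt m (X + Y) (hid l)))
  refine ⟨fun l => (hD l).differentiableAt, fun l => ?_⟩
  -- notation
  set a := exp ((-(l / 2)) • Y) with ha
  set b := exp ((-(l / 2)) • X) with hb
  set c := exp (l • (X + Y)) with hc
  set a' := exp ((l / 2) • Y) with ha'
  set b' := exp ((l / 2) • X) with hb'
  set c' := exp ((-l) • (X + Y)) with hc'
  have haa : a * a' = 1 := by
    erw [ha, ha', ← exp_add_of_commute (((Commute.refl Y).smul_left _).smul_right _),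
      ← add_smul]
    norm_num [exp_zero]
  have hbb : b * b' = 1 := by
    erw [hb, hb', ← exp_add_of_commute (((Commute.refl X).smul_left _).smul_right _),
      ← add_smul]
    norm_num [exp_zero]
  have hcc : c * c' = 1 := by
    erw [hc, hc', ← exp_add_of_commute (((Commute.refl (X + Y)).smul_left _).smul_right _),
      ← add_smul]
    norm_num [exp_zero]
  have hRinv : R₁ l * (c' * (b' * a')) = 1 := by
    rw [hR₁]
    simp only [mul_assoc]
    rw [← hc, ← hb, ← ha]
    rw [← mul_assoc c c', hcc, one_mul, ← mul_assoc b b', hbb, one_mul, haa]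
  have hunit : IsUnit (R₁ l) := (Matrix.isUnit_iff_isUnit_det _).2 (Matrix.isUnit_det_of_right_inverse hRinv)
  have hinv : (R₁ l)⁻¹ = c' * (b' * a') := Matrix.inv_eq_right_inv hRinv
  refine ⟨hunit, ?_⟩
  erw [(hD l).deriv, hinv]
  -- commutation facts
  have hYa : ∀ z, a * (Y * z) = Y * (a * z) := fun z => by
    rw [← mul_assoc, ← mul_assoc, ha,
      (((Commute.refl Y).smul_left (-(l / 2) : ℝ)).exp_left).eq]
  have hXb : ∀ z, b * (X * z) = X * (b * z) := fun z => by
    rw [← mul_assoc, ← mul_assoc, hb,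
      (((Commute.refl X).smul_left (-(l / 2) : ℝ)).exp_left).eq]
  have hXYc : ∀ z, c * ((X + Y) * z) = (X + Y) * (c * z) := fun z => by
    rw [← mul_assoc, ← mul_assoc, hc,
      (((Commute.refl (X + Y)).smul_left (l : ℝ)).exp_left).eq]
  have hcz : ∀ z, c * (c' * z) = z := fun z => by rw [← mul_assoc, hcc, one_mul]
  have hbz : ∀ z, b * (b' * z) = z := fun z => by rw [← mul_assoc, hbb, one_mul]
  have e1 : (-(1 / 2 : ℝ)) • (a * Y) * b * c * (c' * (b' * a')) = -((1 / 2 : ℝ) • Y) := by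
    simp only [smul_mul_assoc, mul_assoc, hcz, hbz]
    rw [hYa, haa, mul_one, neg_smul]
  have e2 : a * ((-(1 / 2 : ℝ)) • (b * X)) * c * (c' * (b' * a')) =
      -((1 / 2 : ℝ) • (a * (X * a'))) := by
    simp only [smul_mul_assoc, mul_smul_comm, mul_assoc, hcz]
    rw [hXb, hbz, neg_smul]
  have e3 : a * b * (c * (X + Y)) * (c' * (b' * a')) =
      a * (X * a') + a * (b * (Y * (b' * a'))) := by
    simp only [mul_assoc, hXYc, hcz]
    rw [add_mul, mul_add, mul_add, hXb, hbz]
  have h2 : ∀ M : Matrix (Fin m) (Fin m) ℂ, (1 / 2 : ℂ) • M = (1 / 2 : ℝ) • M := fun M => by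
    rw [real_smul_eq]; norm_num
  simp only [one_smul, add_mul]
  rw [e1, e2, e3, h2, h2]
  simp only [add_mul, mul_add, smul_mul_assoc, mul_smul_comm, mul_assoc]
  module
end

section
/- Let A be a complex Banach algebra with unit and sub-multiplicative norm, let X, Y ∈ A, let (C_j)_{j≥2} be any sequence in A, and let λ ≥ 0. For n ≥ 2 define the truncated symmetric product Ψₙ(λ) = e^{λX/2} e^{λY/2} e^{λ²C₂} e^{λ³C₃} ⋯ e^{λⁿCₙ} · e^{λⁿCₙ} ⋯ e^{λ³C₃} e^{λ²C₂} e^{λY/2} e^{λX/2}. Then for all n ≥ 2 and k > 0, ‖Ψ_{n+k}(λ) − Ψₙ(λ)‖ ≤ exp( λ(‖X‖ + ‖Y‖) + 2 Σ_{j=2}^{n} λ^j ‖C_j‖ ) · ( exp( 2 Σ_{j=n+1}^{n+k} λ^j ‖C_j‖ ) − 1 ). -/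
/-- The truncated symmetric (palindromic) Zassenhaus product
`Ψₙ(λ) = e^{λX/2} e^{λY/2} e^{λ²C₂} ⋯ e^{λⁿCₙ} · e^{λⁿCₙ} ⋯ e^{λ²C₂} e^{λY/2} e^{λX/2}`. -/
noncomputable def symmZassenhausProd {𝒜 : Type*} [NormedRing 𝒜] [NormedAlgebra ℂ 𝒜]
    (X Y : 𝒜) (C : ℕ → 𝒜) (n : ℕ) (l : ℝ) : 𝒜 :=
  NormedSpace.exp ((l / 2) • X) * NormedSpace.exp ((l / 2) • Y) *
    ((List.range' 2 (n - 1)).map fun j => NormedSpace.exp (l ^ j • C j)).prod *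
    (((List.range' 2 (n - 1)).map fun j => NormedSpace.exp (l ^ j • C j)).reverse).prod *
    NormedSpace.exp ((l / 2) • Y) * NormedSpace.exp ((l / 2) • X)

theorem aux_sum_range' (f : ℕ → ℝ) (m s : ℕ) :
    ((List.range' s m).map f).sum = ∑ i ∈ Finset.range m, f (s + i) := by
  induction m generalizing s with
  | zero => simp
  | succ m ih =>
    rw [List.range'_succ, Finset.sum_range_succ']
    simp [ih (s+1), Nat.add_comm, Nat.add_assoc, Nat.add_left_comm, add_comm]

open NormedSpace in
theorem aux_norm_exp_sub_one_le {𝒜 : Type*} [NormedRing 𝒜] [NormedAlgebra ℂ 𝒜] [CompleteSpace 𝒜]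
    (a : 𝒜) : ‖exp a - 1‖ ≤ Real.exp ‖a‖ - 1 := by
  have h1 : HasSum (fun n => ((n.factorial : ℂ))⁻¹ • a ^ n) (exp a) :=
    NormedSpace.exp_series_hasSum_exp' a
  have h2 : HasSum (fun n => ((n.factorial : ℝ))⁻¹ • ‖a‖ ^ n) (Real.exp ‖a‖) := by
    rw [Real.exp_eq_exp_ℝ]; exact NormedSpace.exp_series_hasSum_exp' ‖a‖
  have h1' : HasSum (fun n => ((n+1).factorial : ℂ)⁻¹ • a ^ (n+1)) (exp a - 1) := by
    have := (hasSum_nat_add_iff' (f := fun n => ((n.factorial : ℂ))⁻¹ • a ^ n) 1).mpr h1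
    simpa using this
  have h2' : HasSum (fun n => ((n+1).factorial : ℝ)⁻¹ • ‖a‖ ^ (n+1)) (Real.exp ‖a‖ - 1) := by
    have := (hasSum_nat_add_iff' (f := fun n => ((n.factorial : ℝ))⁻¹ • ‖a‖ ^ n) 1).mpr h2
    simpa using this
  refine h1'.norm_le_of_bounded h2' fun n => ?_
  rw [norm_smul]
  have h3 : ‖a ^ (n+1)‖ ≤ ‖a‖ ^ (n+1) := norm_pow_le' a (Nat.succ_pos n)
  have h4 : ‖(((n+1).factorial : ℂ))⁻¹‖ = ((n+1).factorial : ℝ)⁻¹ := by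
    rw [norm_inv]; norm_num
  rw [h4, smul_eq_mul]
  gcongr

theorem aux_mul_sub_one_bound {𝒜 : Type*} [NormedRing 𝒜] {u v : 𝒜} {A B : ℝ}
    (hA : 1 ≤ A) (hB : 1 ≤ B) (hu : ‖u - 1‖ ≤ A - 1) (hv : ‖v - 1‖ ≤ B - 1) :
    ‖u * v - 1‖ ≤ A * B - 1 := by
  have key : u * v - 1 = (u - 1) * (v - 1) + (u - 1) + (v - 1) := by noncomm_ring
  have h1 : ‖u * v - 1‖ ≤ ‖(u-1)*(v-1)‖ + ‖u-1‖ + ‖v-1‖ := by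
    rw [key]; exact (norm_add_le _ _).trans (by gcongr; exact norm_add_le _ _)
  have h2 : ‖(u-1)*(v-1)‖ ≤ ‖u-1‖ * ‖v-1‖ := norm_mul_le _ _
  nlinarith [norm_nonneg (u-1), norm_nonneg (v-1)]

theorem aux_list_prod_sub_one_bound {𝒜 : Type*} [NormedRing 𝒜] (f : ℕ → 𝒜) (g : ℕ → ℝ) :
    ∀ L : List ℕ, (∀ j ∈ L, ‖f j - 1‖ ≤ Real.exp (g j) - 1 ∧ 0 ≤ g j) →
      ‖(L.map f).prod - 1‖ ≤ Real.exp ((L.map g).sum) - 1 := by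
  intro L
  induction L with
  | nil => simp
  | cons a L ih =>
    intro h
    simp only [List.map_cons, List.prod_cons, List.sum_cons, Real.exp_add]
    have ha := h a (List.mem_cons_self)
    have hL := ih fun j hj => h j (List.mem_cons_of_mem a hj)
    have hLsum : 0 ≤ (L.map g).sum := by
      apply List.sum_nonneg; intro x hx
      obtain ⟨j, hj, rfl⟩ := List.mem_map.mp hx
      exact (h j (List.mem_cons_of_mem a hj)).2
    exact aux_mul_sub_one_bound (Real.one_le_exp ha.2) (Real.one_le_exp hLsum) ha.1 hL

/-- Bound on the difference of truncated symmetric Zassenhaus products: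
`‖Ψ_{n+k}(λ) − Ψₙ(λ)‖ ≤ exp(λ(‖X‖+‖Y‖) + 2 Σ_{j=2}^n λ^j ‖C_j‖) ·
  (exp(2 Σ_{j=n+1}^{n+k} λ^j ‖C_j‖) − 1)`. -/
theorem norm_symmZassenhausProd_sub_le {𝒜 : Type*} [NormedRing 𝒜] [NormedAlgebra ℂ 𝒜]
    [CompleteSpace 𝒜] (X Y : 𝒜) (C : ℕ → 𝒜) (l : ℝ) (hl : 0 ≤ l) :
    ∀ n : ℕ, 2 ≤ n → ∀ k : ℕ, 0 < k →
      ‖symmZassenhausProd X Y C (n + k) l - symmZassenhausProd X Y C n l‖ ≤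
        Real.exp (l * (‖X‖ + ‖Y‖) + 2 * ∑ j ∈ Finset.Icc 2 n, l ^ j * ‖C j‖) *
          (Real.exp (2 * ∑ j ∈ Finset.Icc (n + 1) (n + k), l ^ j * ‖C j‖) - 1) := by
  intro n hn k hk
  set f : ℕ → 𝒜 := fun j => NormedSpace.exp (l ^ j • C j) with hf
  set g : ℕ → ℝ := fun j => l ^ j * ‖C j‖ with hg
  set EX : 𝒜 := NormedSpace.exp ((l / 2) • X) with hEXdef
  set EY : 𝒜 := NormedSpace.exp ((l / 2) • Y) with hEYdef
  set LP : List ℕ := List.range' 2 (n - 1) with hLP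
  set LR : List ℕ := List.range' (n + 1) k with hLR
  -- split of the range
  have hsplit : List.range' 2 (n + k - 1) = LP ++ LR := by
    rw [hLP, hLR]
    have h1 : n + k - 1 = k + (n - 1) := by omega
    have h2 : n + 1 = 2 + 1 * (n - 1) := by omega
    rw [h1, h2, List.range'_append]
    congr 1; omega
  -- element-wise bounds for the C-exponentials
  have hfg : ∀ j : ℕ, ‖f j - 1‖ ≤ Real.exp (g j) - 1 ∧ 0 ≤ g j := by
    intro j
    constructor
    · have := aux_norm_exp_sub_one_le (l ^ j • C j)
      have hnorm : ‖l ^ j • C j‖ = l ^ j * ‖C j‖ := by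
        rw [norm_smul, Real.norm_of_nonneg (pow_nonneg hl j)]
      rw [hnorm] at this
      exact this
    · positivity
  -- abbreviations
  set P : 𝒜 := (LP.map f).prod with hP
  set Q : 𝒜 := ((LP.map f).reverse).prod with hQ
  set R : 𝒜 := (LR.map f).prod with hR
  set R' : 𝒜 := ((LR.map f).reverse).prod with hR'
  set SP : ℝ := (LP.map g).sum with hSP
  set T : ℝ := (LR.map g).sum with hT
  have hSPnn : 0 ≤ SP := by
    apply List.sum_nonneg; intro x hx
    obtain ⟨j, _, rfl⟩ := List.mem_map.mp hx
    exact (hfg j).2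
  have hTnn : 0 ≤ T := by
    apply List.sum_nonneg; intro x hx
    obtain ⟨j, _, rfl⟩ := List.mem_map.mp hx
    exact (hfg j).2
  -- bounds on pieces
  have hPb : ‖P - 1‖ ≤ Real.exp SP - 1 :=
    aux_list_prod_sub_one_bound f g LP (fun j _ => hfg j)
  have hQb : ‖Q - 1‖ ≤ Real.exp SP - 1 := by
    have h := aux_list_prod_sub_one_bound f g LP.reverse (fun j _ => hfg j)
    rw [List.map_reverse, List.map_reverse, List.sum_reverse] at h
    exact h
  have hRb : ‖R - 1‖ ≤ Real.exp T - 1 :=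
    aux_list_prod_sub_one_bound f g LR (fun j _ => hfg j)
  have hR'b : ‖R' - 1‖ ≤ Real.exp T - 1 := by
    have h := aux_list_prod_sub_one_bound f g LR.reverse (fun j _ => hfg j)
    rw [List.map_reverse, List.map_reverse, List.sum_reverse] at h
    exact h
  have hEXb : ‖EX - 1‖ ≤ Real.exp (l / 2 * ‖X‖) - 1 := by
    have := aux_norm_exp_sub_one_le ((l / 2) • X)
    rwa [norm_smul, Real.norm_of_nonneg (by linarith : (0:ℝ) ≤ l / 2)] at this
  have hEYb : ‖EY - 1‖ ≤ Real.exp (l / 2 * ‖Y‖) - 1 := by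
    have := aux_norm_exp_sub_one_le ((l / 2) • Y)
    rwa [norm_smul, Real.norm_of_nonneg (by linarith : (0:ℝ) ≤ l / 2)] at this
  have hXnn : (0:ℝ) ≤ l / 2 * ‖X‖ := by positivity
  have hYnn : (0:ℝ) ≤ l / 2 * ‖Y‖ := by positivity
  -- combined bounds
  have hMb : ‖EX * EY * P - 1‖ ≤ Real.exp (l / 2 * ‖X‖ + l / 2 * ‖Y‖ + SP) - 1 := by
    rw [Real.exp_add, Real.exp_add]
    refine aux_mul_sub_one_bound ?_ (Real.one_le_exp hSPnn) ?_ hPb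
    · nlinarith [Real.one_le_exp hXnn, Real.one_le_exp hYnn]
    · rw [← Real.exp_add]
      exact aux_mul_sub_one_bound (Real.one_le_exp hXnn) (Real.one_le_exp hYnn) hEXb hEYb
        |>.trans_eq (by rw [Real.exp_add])
  have hNb : ‖Q * EY * EX - 1‖ ≤ Real.exp (SP + l / 2 * ‖Y‖ + l / 2 * ‖X‖) - 1 := by
    rw [Real.exp_add, Real.exp_add]
    refine aux_mul_sub_one_bound ?_ (Real.one_le_exp hXnn) ?_ hEXb
    · nlinarith [Real.one_le_exp hSPnn, Real.one_le_exp hYnn]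
    · rw [← Real.exp_add]
      exact aux_mul_sub_one_bound (Real.one_le_exp hSPnn) (Real.one_le_exp hYnn) hQb hEYb
        |>.trans_eq (by rw [Real.exp_add])
  have hZb : ‖R * R' - 1‖ ≤ Real.exp (T + T) - 1 := by
    rw [Real.exp_add]
    exact aux_mul_sub_one_bound (Real.one_le_exp hTnn) (Real.one_le_exp hTnn) hRb hR'b
  -- the difference identity
  have hdiff : symmZassenhausProd X Y C (n + k) l - symmZassenhausProd X Y C n l =
      (EX * EY * P) * (R * R' - 1) * (Q * EY * EX) := by
    unfold symmZassenhausProd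
    rw [hsplit]
    simp only [List.map_append, List.prod_append, List.reverse_append, ← hf, ← hEXdef, ← hEYdef,
      ← hLP, ← hLR, ← hP, ← hQ, ← hR, ← hR']
    noncomm_ring
  -- sums in terms of Finset.Icc
  have hSPsum : SP = ∑ j ∈ Finset.Icc 2 n, l ^ j * ‖C j‖ := by
    rw [hSP, hLP, aux_sum_range' g]
    rw [show Finset.Icc 2 n = Finset.Ico 2 (n + 1) by rw [Finset.Ico_add_one_right_eq_Icc],
      Finset.sum_Ico_eq_sum_range, show n + 1 - 2 = n - 1 from by omega]
  have hTsum : T = ∑ j ∈ Finset.Icc (n + 1) (n + k), l ^ j * ‖C j‖ := by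
    rw [hT, hLR, aux_sum_range' g]
    rw [show Finset.Icc (n+1) (n+k) = Finset.Ico (n+1) (n+k+1) by rw [Finset.Ico_add_one_right_eq_Icc],
      Finset.sum_Ico_eq_sum_range, show n + k + 1 - (n + 1) = k from by omega]
  -- final estimate
  rw [hdiff]
  set M : 𝒜 := EX * EY * P
  set N : 𝒜 := Q * EY * EX
  set Z : 𝒜 := R * R' - 1
  have key : M * Z * N = (M - 1) * Z * (N - 1) + (M - 1) * Z + Z * (N - 1) + Z := by
    noncomm_ring
  have hnorm : ‖M * Z * N‖ ≤ ‖M - 1‖ * ‖Z‖ * ‖N - 1‖ + ‖M - 1‖ * ‖Z‖ + ‖Z‖ * ‖N - 1‖ + ‖Z‖ := by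
    rw [key]
    refine (norm_add_le _ _).trans ?_
    gcongr
    refine (norm_add_le _ _).trans ?_
    gcongr
    refine (norm_add_le _ _).trans ?_
    gcongr
    · exact (norm_mul_le _ _).trans (by gcongr; exact norm_mul_le _ _)
    · exact norm_mul_le _ _
    · exact norm_mul_le _ _
  refine hnorm.trans ?_
  rw [← hSPsum, ← hTsum]
  have e1 : Real.exp (l * (‖X‖ + ‖Y‖) + 2 * SP) =
      Real.exp (l / 2 * ‖X‖ + l / 2 * ‖Y‖ + SP) * Real.exp (SP + l / 2 * ‖Y‖ + l / 2 * ‖X‖) := by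
    rw [← Real.exp_add]; ring_nf
  have e2 : Real.exp (2 * T) = Real.exp (T + T) := by ring_nf
  rw [e1, e2]
  set A := Real.exp (l / 2 * ‖X‖ + l / 2 * ‖Y‖ + SP)
  set B := Real.exp (SP + l / 2 * ‖Y‖ + l / 2 * ‖X‖)
  set E := Real.exp (T + T)
  have hA1 : 1 ≤ A := Real.one_le_exp (by linarith)
  have hB1 : 1 ≤ B := Real.one_le_exp (by linarith)
  have hE1 : 1 ≤ E := Real.one_le_exp (by linarith)
  have hab : (1 + ‖M - 1‖) * (1 + ‖N - 1‖) ≤ A * B :=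
    mul_le_mul (by linarith) (by linarith) (by positivity) (by linarith)
  calc ‖M - 1‖ * ‖Z‖ * ‖N - 1‖ + ‖M - 1‖ * ‖Z‖ + ‖Z‖ * ‖N - 1‖ + ‖Z‖
      = ‖Z‖ * ((1 + ‖M - 1‖) * (1 + ‖N - 1‖)) := by ring
    _ ≤ (E - 1) * (A * B) :=
        mul_le_mul hZb hab (by positivity) (by linarith)
    _ = A * B * (E - 1) := by ring
end

section
/- Let A be a complex Banach algebra with unit and sub-multiplicative norm, let X, Y ∈ A, let (C_j)_{j≥2} be a sequence in A, and let λ ≥ 0 be such that the series Σ_{j≥2} λ^j ‖C_j‖ converges. Then the sequence of truncated symmetric products Ψₙ(λ) = e^{λX/2} e^{λY/2} e^{λ²C₂} e^{λ³C₃} ⋯ e^{λⁿCₙ} · e^{λⁿCₙ} ⋯ e^{λ³C₃} e^{λ²C₂} e^{λY/2} e^{λX/2} is a Cauchy sequence in A, and hence converges. -/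
open NormedSpace Nat Filter

lemma real_exp_eq_tsum (t : ℝ) : Real.exp t = ∑' n : ℕ, t ^ n / (n ! : ℝ) := by
  rw [Real.exp_eq_exp_ℝ, NormedSpace.exp_eq_tsum_div]

lemma norm_exp_sub_one_le' {𝒜 : Type*} [NormedRing 𝒜] [NormedAlgebra ℂ 𝒜] [CompleteSpace 𝒜]
    (Z : 𝒜) : ‖NormedSpace.exp Z - 1‖ ≤ Real.exp ‖Z‖ - 1 := by
  have hs : Summable fun n : ℕ => ((n ! : ℂ))⁻¹ • Z ^ n := NormedSpace.expSeries_summable' Z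
  have hns : Summable fun n : ℕ => ‖((n ! : ℂ))⁻¹ • Z ^ n‖ := NormedSpace.norm_expSeries_summable' Z
  have hrs : Summable fun n : ℕ => ‖Z‖ ^ n / (n ! : ℝ) := Real.summable_pow_div_factorial ‖Z‖
  have hterm : ∀ n : ℕ, ‖(((n+1)! : ℂ))⁻¹ • Z ^ (n+1)‖ ≤ ‖Z‖ ^ (n+1) / ((n+1)! : ℝ) := by
    intro n
    rw [norm_smul, norm_inv]
    have h1 : ‖((n+1)! : ℂ)‖ = ((n+1)! : ℝ) := by
      simp [Complex.norm_natCast]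
    rw [h1, div_eq_inv_mul]
    exact mul_le_mul_of_nonneg_left (norm_pow_le' Z (Nat.succ_pos n))
      (by positivity)
  have h1 : NormedSpace.exp Z - 1 = ∑' n : ℕ, (((n+1)! : ℂ))⁻¹ • Z ^ (n+1) := by
    rw [congrFun (NormedSpace.exp_eq_tsum (𝕂 := ℂ)) Z, Summable.tsum_eq_zero_add hs]
    simp
  have h2 : Real.exp ‖Z‖ - 1 = ∑' n : ℕ, ‖Z‖ ^ (n+1) / ((n+1)! : ℝ) := by
    rw [real_exp_eq_tsum, Summable.tsum_eq_zero_add hrs]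
    simp
  rw [h1, h2]
  have hns1 : Summable fun n : ℕ => ‖(((n+1)! : ℂ))⁻¹ • Z ^ (n+1)‖ :=
    (summable_nat_add_iff (f := fun n : ℕ => ‖((n ! : ℂ))⁻¹ • Z ^ n‖) 1).2 hns
  have hrs1 : Summable fun n : ℕ => ‖Z‖ ^ (n+1) / ((n+1)! : ℝ) :=
    (summable_nat_add_iff (f := fun n : ℕ => ‖Z‖ ^ n / (n ! : ℝ)) 1).2 hrs
  exact (norm_tsum_le_tsum_norm hns1).trans (Summable.tsum_le_tsum hterm hns1 hrs1)

lemma real_exp_sub_one_le' (a : ℝ) : Real.exp a - 1 ≤ a * Real.exp a := by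
  have h1 : -a + 1 ≤ Real.exp (-a) := Real.add_one_le_exp (-a)
  have h3 : Real.exp (-a) * Real.exp a = 1 := by rw [← Real.exp_add]; simp
  nlinarith [Real.exp_pos a]



/-- If `Σ_{j≥2} λ^j ‖C_j‖` converges, then the truncated symmetric Zassenhaus products
`Ψₙ(λ)` form a Cauchy sequence (hence converge, the algebra being complete). -/
theorem cauchySeq_symmZassenhausProd {𝒜 : Type*} [NormedRing 𝒜] [NormedAlgebra ℂ 𝒜]
    [CompleteSpace 𝒜] (X Y : 𝒜) (C : ℕ → 𝒜) (l : ℝ) (hl : 0 ≤ l)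
    (hsum : Summable fun j : ℕ => l ^ (j + 2) * ‖C (j + 2)‖) :
    CauchySeq (fun n : ℕ => symmZassenhausProd X Y C n l) ∧
      ∃ L : 𝒜, Filter.Tendsto (fun n : ℕ => symmZassenhausProd X Y C n l)
        Filter.atTop (nhds L) := by
  classical
  set f : ℕ → 𝒜 := fun j => NormedSpace.exp (l ^ j • C j) with hfdef
  set a : ℕ → ℝ := fun n => l ^ (n + 2) * ‖C (n + 2)‖ with hadef
  set S : ℝ := ∑' n, a n with hSdef
  have ha0 : ∀ n, 0 ≤ a n := fun n => mul_nonneg (pow_nonneg hl _) (norm_nonneg _)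
  have haS : ∀ n, a n ≤ S := fun n => Summable.le_tsum hsum n fun m _ => ha0 m
  -- the left-multiplication operator seminorm
  set ν : 𝒜 → ℝ := fun x => ‖ContinuousLinearMap.mul ℂ 𝒜 x‖ with hνdef
  have hν0 : ∀ x, 0 ≤ ν x := fun x => norm_nonneg _
  have hνle : ∀ x : 𝒜, ν x ≤ ‖x‖ := fun x => ContinuousLinearMap.opNorm_mul_apply_le ℂ 𝒜 x
  have hνadd : ∀ x y : 𝒜, ν (x + y) ≤ ν x + ν y := by
    intro x y
    simp only [hνdef, map_add]
    exact norm_add_le _ _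
  have hνneg : ∀ x : 𝒜, ν (-x) = ν x := by
    intro x
    simp only [hνdef, map_neg, norm_neg]
  have hνmul : ∀ x y : 𝒜, ν (x * y) ≤ ν x * ν y := by
    intro x y
    have h : ContinuousLinearMap.mul ℂ 𝒜 (x * y)
        = (ContinuousLinearMap.mul ℂ 𝒜 x).comp (ContinuousLinearMap.mul ℂ 𝒜 y) := by
      ext z
      simp [ContinuousLinearMap.mul_apply', mul_assoc]
    simp only [hνdef, h]
    exact ContinuousLinearMap.opNorm_comp_le _ _
  have hν1 : ν 1 ≤ 1 := by
    have h : ContinuousLinearMap.mul ℂ 𝒜 (1 : 𝒜) = ContinuousLinearMap.id ℂ 𝒜 := by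
      ext z
      simp [ContinuousLinearMap.mul_apply']
    simp only [hνdef, h]
    exact ContinuousLinearMap.norm_id_le
  have hback : ∀ x : 𝒜, ‖x‖ ≤ ν x * ‖(1 : 𝒜)‖ := by
    intro x
    have h := (ContinuousLinearMap.mul ℂ 𝒜 x).le_opNorm 1
    simpa [ContinuousLinearMap.mul_apply'] using h
  -- bounds on the exponential factors
  have hfn : ∀ n : ℕ, ‖l ^ (2 + n) • C (2 + n)‖ = a n := by
    intro n
    rw [norm_smul, Real.norm_eq_abs, abs_of_nonneg (pow_nonneg hl _), hadef, add_comm 2 n]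
  have hfsub : ∀ n : ℕ, ν (f (2 + n) - 1) ≤ Real.exp (a n) - 1 := by
    intro n
    refine (hνle _).trans ?_
    have h := norm_exp_sub_one_le' (l ^ (2 + n) • C (2 + n))
    rwa [hfn n] at h
  have hfν : ∀ n : ℕ, ν (f (2 + n)) ≤ Real.exp (a n) := by
    intro n
    have h : f (2 + n) = 1 + (f (2 + n) - 1) := by noncomm_ring
    calc ν (f (2 + n)) = ν (1 + (f (2 + n) - 1)) := by rw [← h]
      _ ≤ ν 1 + ν (f (2 + n) - 1) := hνadd _ _
      _ ≤ 1 + (Real.exp (a n) - 1) := add_le_add hν1 (hfsub n)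
      _ = Real.exp (a n) := by noncomm_ring
  have hνsub : ∀ n : ℕ, ν (1 - f (2 + n)) ≤ a n * Real.exp S := by
    intro n
    have h : (1 : 𝒜) - f (2 + n) = -(f (2 + n) - 1) := by noncomm_ring
    rw [h, hνneg]
    calc ν (f (2 + n) - 1) ≤ Real.exp (a n) - 1 := hfsub n
      _ ≤ a n * Real.exp (a n) := real_exp_sub_one_le' _
      _ ≤ a n * Real.exp S := by
          exact mul_le_mul_of_nonneg_left (Real.exp_le_exp.2 (haS n)) (ha0 n)
  -- the partial products and their reverses
  set g : ℕ → 𝒜 := fun n => ((List.range' 2 n).map f).prod with hgdef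
  set q : ℕ → 𝒜 := fun n => (((List.range' 2 n).map f).reverse).prod with hqdef
  have hgsucc : ∀ n, g (n + 1) = g n * f (2 + n) := by
    intro n
    simp [hgdef, List.range'_1_concat]
  have hqsucc : ∀ n, q (n + 1) = f (2 + n) * q n := by
    intro n
    simp [hqdef, List.range'_1_concat]
  have hgb : ∀ n, ν (g n) ≤ Real.exp (∑ k ∈ Finset.range n, a k) := by
    intro n
    induction n with
    | zero => simpa [hgdef] using hν1
    | succ n ih =>
      rw [hgsucc n, Finset.sum_range_succ, Real.exp_add]
      exact (hνmul _ _).trans (mul_le_mul ih (hfν n) (hν0 _) (Real.exp_pos _).le)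
  have hqb : ∀ n, ν (q n) ≤ Real.exp (∑ k ∈ Finset.range n, a k) := by
    intro n
    induction n with
    | zero => simpa [hqdef] using hν1
    | succ n ih =>
      rw [hqsucc n, Finset.sum_range_succ, Real.exp_add, mul_comm (Real.exp _)]
      exact (hνmul _ _).trans (mul_le_mul (hfν n) ih (hν0 _) (Real.exp_pos _).le)
  have hsumle : ∀ n : ℕ, (∑ k ∈ Finset.range n, a k) ≤ S :=
    fun n => Summable.sum_le_tsum (Finset.range n) (fun i _ => ha0 i) hsum
  have hgS : ∀ n, ν (g n) ≤ Real.exp S :=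
    fun n => (hgb n).trans (Real.exp_le_exp.2 (hsumle n))
  have hqS : ∀ n, ν (q n) ≤ Real.exp S :=
    fun n => (hqb n).trans (Real.exp_le_exp.2 (hsumle n))
  -- summable distance estimates
  have hdg : ∀ n, dist (g n) (g (n + 1)) ≤ (Real.exp S * Real.exp S * ‖(1 : 𝒜)‖) * a n := by
    intro n
    rw [dist_eq_norm]
    have h1 : g n - g (n + 1) = g n * (1 - f (2 + n)) := by rw [hgsucc]; noncomm_ring
    rw [h1]
    calc ‖g n * (1 - f (2 + n))‖ ≤ ν (g n * (1 - f (2 + n))) * ‖(1 : 𝒜)‖ := hback _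
      _ ≤ (ν (g n) * ν (1 - f (2 + n))) * ‖(1 : 𝒜)‖ :=
          mul_le_mul_of_nonneg_right (hνmul _ _) (norm_nonneg _)
      _ ≤ (Real.exp S * (a n * Real.exp S)) * ‖(1 : 𝒜)‖ :=
          mul_le_mul_of_nonneg_right
            (mul_le_mul (hgS n) (hνsub n) (hν0 _) (Real.exp_pos _).le) (norm_nonneg _)
      _ = (Real.exp S * Real.exp S * ‖(1 : 𝒜)‖) * a n := by ring
  have hdq : ∀ n, dist (q n) (q (n + 1)) ≤ (Real.exp S * Real.exp S * ‖(1 : 𝒜)‖) * a n := by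
    intro n
    rw [dist_eq_norm]
    have h1 : q n - q (n + 1) = (1 - f (2 + n)) * q n := by rw [hqsucc]; noncomm_ring
    rw [h1]
    calc ‖(1 - f (2 + n)) * q n‖ ≤ ν ((1 - f (2 + n)) * q n) * ‖(1 : 𝒜)‖ := hback _
      _ ≤ (ν (1 - f (2 + n)) * ν (q n)) * ‖(1 : 𝒜)‖ :=
          mul_le_mul_of_nonneg_right (hνmul _ _) (norm_nonneg _)
      _ ≤ ((a n * Real.exp S) * Real.exp S) * ‖(1 : 𝒜)‖ :=
          mul_le_mul_of_nonneg_right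
            (mul_le_mul (hνsub n) (hqS n) (hν0 _) (by positivity)) (norm_nonneg _)
      _ = (Real.exp S * Real.exp S * ‖(1 : 𝒜)‖) * a n := by ring
  have hsum' : Summable fun n => (Real.exp S * Real.exp S * ‖(1 : 𝒜)‖) * a n := hsum.mul_left _
  have hcg : CauchySeq g :=
    cauchySeq_of_summable_dist (hsum'.of_nonneg_of_le (fun n => dist_nonneg) hdg)
  have hcq : CauchySeq q :=
    cauchySeq_of_summable_dist (hsum'.of_nonneg_of_le (fun n => dist_nonneg) hdq)
  obtain ⟨G, hG⟩ := cauchySeq_tendsto_of_complete hcg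
  obtain ⟨Q, hQ⟩ := cauchySeq_tendsto_of_complete hcq
  have hpsi : (fun n : ℕ => symmZassenhausProd X Y C n l) = fun n : ℕ =>
      NormedSpace.exp ((l / 2) • X) * NormedSpace.exp ((l / 2) • Y) * g (n - 1) *
        q (n - 1) * NormedSpace.exp ((l / 2) • Y) * NormedSpace.exp ((l / 2) • X) := rfl
  have hG' : Tendsto (fun n : ℕ => g (n - 1)) atTop (nhds G) :=
    hG.comp (tendsto_sub_atTop_nat 1)
  have hQ' : Tendsto (fun n : ℕ => q (n - 1)) atTop (nhds Q) :=
    hQ.comp (tendsto_sub_atTop_nat 1)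
  have hT : Tendsto (fun n : ℕ => symmZassenhausProd X Y C n l) atTop
      (nhds (NormedSpace.exp ((l / 2) • X) * NormedSpace.exp ((l / 2) • Y) * G * Q *
        NormedSpace.exp ((l / 2) • Y) * NormedSpace.exp ((l / 2) • X))) := by
    rw [hpsi]
    exact ((((tendsto_const_nhds.mul hG').mul hQ').mul tendsto_const_nhds).mul
      tendsto_const_nhds)
  exact ⟨hT.cauchySeq, _, hT⟩
end

section
/- Let X, Y, Z be n×n complex matrices and a ∈ ℂ such that [X,Y] = Z, [X,Z] = aY and [Y,Z] = 0. Then exp(X+Y) = e^X · exp( f₁(a) Y + f₂(a) Z ), where f₁(a) = Σ_{k≥0} a^k/(2k+1)! and f₂(a) = − Σ_{k≥0} a^k/(2k+2)! (i.e. f₁(a) = sinh(√a)/√a and f₂(a) = (1 − cosh(√a))/a). -/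
open NormedSpace

namespace ExpCyclicAux

section Aux

attribute [local instance] Matrix.linftyOpSemiNormedRing Matrix.linftyOpNormedRing
  Matrix.linftyOpNormedAlgebra

/-- entry extraction as a continuous linear map -/
noncomputable def entryCLM {k : ℕ} (i j : Fin k) : Matrix (Fin k) (Fin k) ℂ →L[ℝ] ℂ :=
  LinearMap.toContinuousLinearMap
    { toFun := fun P => P i j
      map_add' := fun _ _ => rfl
      map_smul' := fun _ _ => rfl }

theorem hasDerivAt_entry {k : ℕ} {f : ℝ → Matrix (Fin k) (Fin k) ℂ}
    {D : Matrix (Fin k) (Fin k) ℂ} {t : ℝ} (h : HasDerivAt f D t) (i j : Fin k) :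
    HasDerivAt (fun t => f t i j) (D i j) t :=
  (entryCLM i j).hasFDerivAt.comp_hasDerivAt t h

theorem eq_of_hasDerivAt_zero {E : Type*} [NormedAddCommGroup E] [NormedSpace ℝ E]
    {F : ℝ → E} (h : ∀ t, HasDerivAt F 0 t) (t : ℝ) : F t = F 0 :=
  is_const_of_deriv_eq_zero (fun x => (h x).differentiableAt) (fun x => (h x).deriv) t 0

theorem hasDerivAt_exp_rsmul {m : ℕ} (A : Matrix (Fin m) (Fin m) ℂ) (t : ℝ) :
    HasDerivAt (fun t : ℝ => exp (t • A)) (A * exp (t • A)) t := by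
  have h := hasDerivAt_exp_smul_const' (𝕂 := ℝ) A t
  exact h

noncomputable def Mm (a : ℂ) : Matrix (Fin 3) (Fin 3) ℂ := !![0, a, 0; 1, 0, 0; 0, -1, 0]

theorem Mm_sq (a : ℂ) : Mm a ^ 2 = !![a, 0, 0; 0, a, 0; -1, 0, 0] := by
  ext i j
  fin_cases i <;> fin_cases j <;>
    simp [Mm, pow_two, Matrix.mul_apply, Fin.sum_univ_three, Matrix.vecHead, Matrix.vecTail]

theorem Mm_cube (a : ℂ) : Mm a ^ 3 = a • Mm a := by
  have : Mm a ^ 3 = Mm a ^ 2 * Mm a := by rw [pow_succ]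
  rw [this, Mm_sq]
  ext i j
  fin_cases i <;> fin_cases j <;>
    simp [Mm, Matrix.mul_apply, Fin.sum_univ_three, Matrix.vecHead, Matrix.vecTail]

theorem Mm_pow_odd (a : ℂ) (k : ℕ) : Mm a ^ (2 * k + 1) = a ^ k • Mm a := by
  induction k with
  | zero => simp
  | succ k ih =>
    have h : 2 * (k + 1) + 1 = (2 * k + 1) + 2 := by ring
    rw [h, pow_add, ih, Algebra.smul_mul_assoc, ← pow_succ' (Mm a) 2]
    rw [show (2:ℕ) + 1 = 3 from rfl] at *
    rw [show Mm a ^ (2+1) = Mm a ^ 3 from rfl, Mm_cube, smul_smul, pow_succ, mul_comm]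

theorem Mm_pow_even (a : ℂ) (k : ℕ) : Mm a ^ (2 * k + 2) = a ^ k • Mm a ^ 2 := by
  have h : 2 * k + 2 = (2 * k + 1) + 1 := by ring
  rw [h, pow_succ, Mm_pow_odd, Algebra.smul_mul_assoc, ← pow_two]

theorem exp_Mm_entry (a : ℂ) (i : Fin 3) :
    exp (Mm a) i 0 = ∑' n : ℕ, ((n.factorial : ℂ))⁻¹ * (Mm a ^ n) i 0 := by
  have hs : Summable (fun n : ℕ => (n.factorial : ℂ)⁻¹ • Mm a ^ n) :=
    expSeries_summable' (𝕂 := ℂ) (Mm a)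
  have h := (entryCLM i 0).map_tsum hs
  rw [exp_eq_tsum ℂ]
  exact h

theorem summable_entry (a : ℂ) (i : Fin 3) :
    Summable (fun n : ℕ => ((n.factorial : ℂ))⁻¹ * (Mm a ^ n) i 0) := by
  have hs : Summable (fun n : ℕ => (n.factorial : ℂ)⁻¹ • Mm a ^ n) :=
    expSeries_summable' (𝕂 := ℂ) (Mm a)
  have := hs.map (entryCLM i 0).toLinearMap.toAddMonoidHom (entryCLM i 0).continuous
  exact this

theorem exp_Mm_10 (a : ℂ) :
    exp (Mm a) 1 0 = ∑' k : ℕ, a ^ k / (((2 * k + 1).factorial : ℕ) : ℂ) := by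
  rw [exp_Mm_entry]
  set g := fun n : ℕ => ((n.factorial : ℂ))⁻¹ * (Mm a ^ n) 1 0 with hg
  have hsum := summable_entry a 1
  have he : ∀ k : ℕ, g (2 * k) = 0 := by
    intro k
    cases k with
    | zero => simp [g]
    | succ k =>
      have : 2 * (k + 1) = 2 * k + 2 := by ring
      rw [this]
      simp [g, Mm_pow_even, Mm_sq, Matrix.smul_apply]
  have ho : ∀ k : ℕ, g (2 * k + 1) = a ^ k / (((2 * k + 1).factorial : ℕ) : ℂ) := by
    intro k
    show ((2 * k + 1).factorial : ℂ)⁻¹ * (Mm a ^ (2 * k + 1)) 1 0 = _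
    rw [Mm_pow_odd]
    simp [Mm, div_eq_mul_inv, mul_comm]
  have hse : Summable fun k => g (2 * k) := hsum.comp_injective fun x y h => by omega
  have hso : Summable fun k => g (2 * k + 1) := hsum.comp_injective fun x y h => by omega
  rw [← tsum_even_add_odd hse hso]
  simp only [he, ho, tsum_zero, zero_add]

theorem exp_Mm_20 (a : ℂ) :
    exp (Mm a) 2 0 = -∑' k : ℕ, a ^ k / (((2 * k + 2).factorial : ℕ) : ℂ) := by
  rw [exp_Mm_entry]
  set g := fun n : ℕ => ((n.factorial : ℂ))⁻¹ * (Mm a ^ n) 2 0 with hg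
  have hsum := summable_entry a 2
  have ho : ∀ k : ℕ, g (2 * k + 1) = 0 := by
    intro k
    show ((2 * k + 1).factorial : ℂ)⁻¹ * (Mm a ^ (2 * k + 1)) 2 0 = 0
    rw [Mm_pow_odd]
    simp [Mm]
  have he : ∀ k : ℕ, g (2 * (k + 1)) = -(a ^ k / (((2 * k + 2).factorial : ℕ) : ℂ)) := by
    intro k
    have : 2 * (k + 1) = 2 * k + 2 := by ring
    rw [this]
    show ((2 * k + 2).factorial : ℂ)⁻¹ * (Mm a ^ (2 * k + 2)) 2 0 = _
    rw [Mm_pow_even, Mm_sq]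
    simp [div_eq_mul_inv, mul_comm]
  have hse : Summable fun k => g (2 * k) := hsum.comp_injective fun x y h => by omega
  have hso : Summable fun k => g (2 * k + 1) := hsum.comp_injective fun x y h => by omega
  rw [← tsum_even_add_odd hse hso]
  simp only [ho, tsum_zero, add_zero]
  rw [Summable.tsum_eq_zero_add hse]
  have h0 : g (2 * 0) = 0 := by simp [g]
  simp only [mul_zero] at h0 ⊢
  rw [h0, zero_add]
  rw [show (fun k => g (2 * (k + 1))) = fun k => -(a ^ k / (((2 * k + 2).factorial : ℕ) : ℂ)) from
    funext he]
  exact tsum_neg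

/-! The scalar functions `C`, `S`, `G` as entries of `exp (t • Mm a)`. -/

noncomputable def Cf (a : ℂ) (t : ℝ) : ℂ := exp (t • Mm a) 0 0
noncomputable def Sf (a : ℂ) (t : ℝ) : ℂ := exp (t • Mm a) 1 0
noncomputable def Gf (a : ℂ) (t : ℝ) : ℂ := exp (t • Mm a) 2 0

theorem hasDerivAt_Cf (a : ℂ) (t : ℝ) : HasDerivAt (Cf a) (a * Sf a t) t := by
  have h := hasDerivAt_entry (hasDerivAt_exp_rsmul (Mm a) t) 0 0
  convert h using 1
  · rfl
  simp [Mm, Sf, Matrix.mul_apply, Fin.sum_univ_three]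

theorem hasDerivAt_Sf (a : ℂ) (t : ℝ) : HasDerivAt (Sf a) (Cf a t) t := by
  have h := hasDerivAt_entry (hasDerivAt_exp_rsmul (Mm a) t) 1 0
  convert h using 1
  · rfl
  simp [Mm, Cf, Matrix.mul_apply, Fin.sum_univ_three, Matrix.vecHead, Matrix.vecTail]

theorem hasDerivAt_Gf (a : ℂ) (t : ℝ) : HasDerivAt (Gf a) (-Sf a t) t := by
  have h := hasDerivAt_entry (hasDerivAt_exp_rsmul (Mm a) t) 2 0
  convert h using 1
  · rfl
  simp [Mm, Sf, Matrix.mul_apply, Fin.sum_univ_three, Matrix.vecHead, Matrix.vecTail]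

theorem Cf_zero (a : ℂ) : Cf a 0 = 1 := by
  simp [Cf, Matrix.one_apply]

theorem Sf_zero (a : ℂ) : Sf a 0 = 0 := by
  simp [Sf, Matrix.one_apply]

theorem Gf_zero (a : ℂ) : Gf a 0 = 0 := by
  simp [Gf, Matrix.one_apply]

theorem Sf_one (a : ℂ) : Sf a 1 = ∑' k : ℕ, a ^ k / (((2 * k + 1).factorial : ℕ) : ℂ) := by
  rw [Sf, one_smul, exp_Mm_10]

theorem Gf_one (a : ℂ) : Gf a 1 = -∑' k : ℕ, a ^ k / (((2 * k + 2).factorial : ℕ) : ℂ) := by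
  rw [Gf, one_smul, exp_Mm_20]

end Aux

end ExpCyclicAux

/-- Under the cyclic relations `[X,Y] = Z`, `[X,Z] = aY`, `[Y,Z] = 0`, the Zassenhaus formula
sums to `exp (X+Y) = e^X · exp (f₁(a) Y + f₂(a) Z)` with `f₁(a) = Σ a^k/(2k+1)!` and
`f₂(a) = −Σ a^k/(2k+2)!`. -/
theorem exp_add_of_cyclic_relations (m : ℕ) (X Y Z : Matrix (Fin m) (Fin m) ℂ) (a : ℂ)
    (h1 : ⁅X, Y⁆ = Z) (h2 : ⁅X, Z⁆ = a • Y) (h3 : ⁅Y, Z⁆ = 0)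
    (f₁ f₂ : ℂ) (hf₁ : f₁ = ∑' k : ℕ, a ^ k / ((2 * k + 1).factorial : ℂ))
    (hf₂ : f₂ = -∑' k : ℕ, a ^ k / ((2 * k + 2).factorial : ℂ)) :
    NormedSpace.exp (X + Y) =
      NormedSpace.exp X * NormedSpace.exp (f₁ • Y + f₂ • Z) := by
  letI : SeminormedRing (Matrix (Fin m) (Fin m) ℂ) := Matrix.linftyOpSemiNormedRing
  letI : NormedRing (Matrix (Fin m) (Fin m) ℂ) := Matrix.linftyOpNormedRing
  letI : NormedAlgebra ℝ (Matrix (Fin m) (Fin m) ℂ) := Matrix.linftyOpNormedAlgebra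
  letI : NormedAlgebra ℂ (Matrix (Fin m) (Fin m) ℂ) := Matrix.linftyOpNormedAlgebra
  rw [Ring.lie_def] at h1 h2 h3
  have hYZ : Y * Z = Z * Y := sub_eq_zero.mp h3
  have hXY : X * Y = Z + Y * X := sub_eq_iff_eq_add.mp h1
  have hXZ : X * Z = a • Y + Z * X := sub_eq_iff_eq_add.mp h2
  set C : ℝ → ℂ := ExpCyclicAux.Cf a with hCdef
  set S : ℝ → ℂ := ExpCyclicAux.Sf a with hSdef
  set G : ℝ → ℂ := ExpCyclicAux.Gf a with hGdef
  have hC : ∀ t, HasDerivAt C (a * S t) t := ExpCyclicAux.hasDerivAt_Cf a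
  have hS : ∀ t, HasDerivAt S (C t) t := ExpCyclicAux.hasDerivAt_Sf a
  have hG : ∀ t, HasDerivAt G (-S t) t := ExpCyclicAux.hasDerivAt_Gf a
  have hC0 : C 0 = 1 := ExpCyclicAux.Cf_zero a
  have hS0 : S 0 = 0 := ExpCyclicAux.Sf_zero a
  have hG0 : G 0 = 0 := ExpCyclicAux.Gf_zero a
  -- inverses of exponentials
  have hinv : ∀ (A : Matrix (Fin m) (Fin m) ℂ) (t : ℝ),
      NormedSpace.exp (t • -A) * NormedSpace.exp (t • A) = 1 := by
    intro A t
    have hcm : Commute (t • -A) (t • A) :=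
      (((Commute.refl A).neg_left).smul_left t).smul_right t
    rw [← Matrix.exp_add_of_commute _ _ hcm]
    simp
  have hinv' : ∀ (A : Matrix (Fin m) (Fin m) ℂ) (t : ℝ),
      NormedSpace.exp (t • A) * NormedSpace.exp (t • -A) = 1 := by
    intro A t
    have hcm : Commute (t • A) (t • -A) :=
      (((Commute.refl A).neg_right).smul_left t).smul_right t
    rw [← Matrix.exp_add_of_commute _ _ hcm]
    simp
  have cXeX : ∀ t : ℝ, Commute X (NormedSpace.exp (t • X)) :=
    fun t => (((Commute.refl X).smul_right t).exp_right)
  -- Step 1 : the conjugation identity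
  have key : ∀ t : ℝ, NormedSpace.exp (t • X) * (C t • Y - S t • Z) =
      Y * NormedSpace.exp (t • X) := by
    have hD : ∀ t : ℝ, HasDerivAt
        (fun t : ℝ => NormedSpace.exp (t • X) * (C t • Y - S t • Z) *
          NormedSpace.exp (t • -X)) 0 t := by
      intro t
      have hR : HasDerivAt (fun t => C t • Y - S t • Z) ((a * S t) • Y - C t • Z) t :=
        ((hC t).smul_const Y).sub ((hS t).smul_const Z)
      have h := ((ExpCyclicAux.hasDerivAt_exp_rsmul X t).mul hR).mul
        (ExpCyclicAux.hasDerivAt_exp_rsmul (-X) t)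
      have hcomm : X * NormedSpace.exp (t • X) = NormedSpace.exp (t • X) * X := (cXeX t).eq
      set E := NormedSpace.exp (t • X) with hE
      set N := NormedSpace.exp (t • -X) with hN
      have inner : X * (C t • Y - S t • Z) + ((a * S t) • Y - C t • Z)
          - (C t • Y - S t • Z) * X = 0 := by
        simp only [mul_sub, sub_mul, Matrix.mul_smul, Matrix.smul_mul, hXY, hXZ]
        module
      have e0 : (X * E * (C t • Y - S t • Z) + E * ((a * S t) • Y - C t • Z)) * N
          + E * (C t • Y - S t • Z) * (-X * N) = 0 := by
        have expand : (X * E * (C t • Y - S t • Z) + E * ((a * S t) • Y - C t • Z)) * N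
            + E * (C t • Y - S t • Z) * (-X * N)
            = E * (X * (C t • Y - S t • Z) + ((a * S t) • Y - C t • Z)
                - (C t • Y - S t • Z) * X) * N := by
          rw [hcomm]; noncomm_ring
        rw [expand, inner, mul_zero, zero_mul]
      rw [← e0]
      exact h
    have hconst := ExpCyclicAux.eq_of_hasDerivAt_zero hD
    intro t
    have ht : NormedSpace.exp (t • X) * (C t • Y - S t • Z) * NormedSpace.exp (t • -X)
        = Y := by
      have := hconst t
      simpa [hC0, hS0] using this
    calc NormedSpace.exp (t • X) * (C t • Y - S t • Z)
        = NormedSpace.exp (t • X) * (C t • Y - S t • Z) *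
            (NormedSpace.exp (t • -X) * NormedSpace.exp (t • X)) := by
          rw [hinv X t, mul_one]
      _ = (NormedSpace.exp (t • X) * (C t • Y - S t • Z) * NormedSpace.exp (t • -X)) *
            NormedSpace.exp (t • X) := by noncomm_ring
      _ = Y * NormedSpace.exp (t • X) := by rw [ht]
  -- Step 2 : the product satisfies the same ODE as exp (t(X+Y))
  have hΦ : ∀ t : ℝ, HasDerivAt
      (fun t : ℝ => NormedSpace.exp (t • X) * NormedSpace.exp (S t • Y) *
        NormedSpace.exp (G t • Z))
      ((X + Y) * (NormedSpace.exp (t • X) * NormedSpace.exp (S t • Y) *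
        NormedSpace.exp (G t • Z))) t := by
    intro t
    have hφY : HasDerivAt (fun t : ℝ => NormedSpace.exp (S t • Y))
        (C t • (Y * NormedSpace.exp (S t • Y))) t :=
      HasDerivAt.scomp (x := t) (hasDerivAt_exp_smul_const' (𝕂 := ℂ) Y (S t)) (hS t)
    have hφZ : HasDerivAt (fun t : ℝ => NormedSpace.exp (G t • Z))
        ((-S t) • (Z * NormedSpace.exp (G t • Z))) t :=
      HasDerivAt.scomp (x := t) (hasDerivAt_exp_smul_const' (𝕂 := ℂ) Z (G t)) (hG t)
    have h := ((ExpCyclicAux.hasDerivAt_exp_rsmul X t).mul hφY).mul hφZ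
    have cZY : Commute Z Y := hYZ.symm
    have hZFy : Z * NormedSpace.exp (S t • Y) = NormedSpace.exp (S t • Y) * Z :=
      ((cZY.smul_right (S t)).exp_right).eq
    set E := NormedSpace.exp (t • X) with hE
    set Fy := NormedSpace.exp (S t • Y) with hFy
    set Fz := NormedSpace.exp (G t • Z) with hFz
    have expand : (X * E * Fy + E * (C t • (Y * Fy))) * Fz + E * Fy * ((-S t) • (Z * Fz))
        = X * (E * Fy * Fz) + (E * (C t • Y - S t • Z)) * (Fy * Fz) := by
      simp only [mul_smul_comm, smul_mul_assoc, mul_assoc, mul_sub, sub_mul, smul_sub,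
        mul_neg, neg_mul, smul_neg, neg_smul]
      rw [← mul_assoc Fy Z Fz, ← hZFy, mul_assoc Z Fy Fz]
      simp only [add_mul, smul_mul_assoc, mul_assoc]
      module
    have e0 : (X * E * Fy + E * (C t • (Y * Fy))) * Fz + E * Fy * ((-S t) • (Z * Fz))
        = (X + Y) * (E * Fy * Fz) := by
      rw [expand, key t]
      noncomm_ring
    rw [← e0]
    exact h
  -- Step 3 : conclude via constancy
  have hΨΦ : ∀ t : ℝ, HasDerivAt
      (fun t : ℝ => NormedSpace.exp (t • -(X + Y)) *
        (NormedSpace.exp (t • X) * NormedSpace.exp (S t • Y) *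
          NormedSpace.exp (G t • Z))) 0 t := by
    intro t
    have h := (ExpCyclicAux.hasDerivAt_exp_rsmul (-(X + Y)) t).mul (hΦ t)
    have hcomm : NormedSpace.exp (t • -(X + Y)) * (X + Y)
        = (X + Y) * NormedSpace.exp (t • -(X + Y)) :=
      (((((Commute.refl (X + Y)).neg_right).smul_right t).exp_right).eq).symm
    set P := NormedSpace.exp (t • -(X + Y)) with hP
    set Q := NormedSpace.exp (t • X) * NormedSpace.exp (S t • Y) *
      NormedSpace.exp (G t • Z) with hQ
    have e0 : -(X + Y) * P * Q + P * ((X + Y) * Q) = 0 := by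
      rw [← mul_assoc P (X + Y) Q, hcomm]
      noncomm_ring
    rw [e0] at h
    exact h
  have hone : ∀ t : ℝ, NormedSpace.exp (t • -(X + Y)) *
      (NormedSpace.exp (t • X) * NormedSpace.exp (S t • Y) *
        NormedSpace.exp (G t • Z)) = 1 := by
    intro t
    have := ExpCyclicAux.eq_of_hasDerivAt_zero hΨΦ t
    simpa [hS0, hG0] using this
  have hΦeq : ∀ t : ℝ, NormedSpace.exp (t • (X + Y)) =
      NormedSpace.exp (t • X) * NormedSpace.exp (S t • Y) *
        NormedSpace.exp (G t • Z) := by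
    intro t
    calc NormedSpace.exp (t • (X + Y))
        = NormedSpace.exp (t • (X + Y)) * (NormedSpace.exp (t • -(X + Y)) *
            (NormedSpace.exp (t • X) * NormedSpace.exp (S t • Y) *
              NormedSpace.exp (G t • Z))) := by rw [hone t, mul_one]
      _ = (NormedSpace.exp (t • (X + Y)) * NormedSpace.exp (t • -(X + Y))) *
            (NormedSpace.exp (t • X) * NormedSpace.exp (S t • Y) *
              NormedSpace.exp (G t • Z)) := by noncomm_ring
      _ = _ := by rw [hinv' (X + Y) t, one_mul]
  have hS1 : S 1 = f₁ := by rw [hf₁]; exact ExpCyclicAux.Sf_one a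
  have hG1 : G 1 = f₂ := by rw [hf₂]; exact_mod_cast ExpCyclicAux.Gf_one a
  have cYZ : Commute Y Z := hYZ
  have hcomYZ : Commute (f₁ • Y) (f₂ • Z) :=
    (cYZ.smul_left f₁).smul_right f₂
  have final := hΦeq 1
  rw [one_smul, one_smul, hS1, hG1] at final
  rw [final, Matrix.exp_add_of_commute _ _ hcomYZ, mul_assoc]
end

section
/- Let X, Y, Z be n×n complex matrices and a ∈ ℂ such that [X,Y] = Z, [X,Z] = aY and [Y,Z] = 0. Then exp(X+Y) = e^{X/2} · exp( f₃(a) Y ) · e^{X/2}, where f₃(a) = Σ_{k≥0} a^k/(4^k (2k+1)!) (i.e. f₃(a) = (2/√a) sinh(√a/2)). -/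
open NormedSpace

set_option linter.unusedSectionVars false

namespace ZassAux

variable {𝔸 : Type*} [NormedRing 𝔸] [NormedAlgebra ℂ 𝔸] [NormedAlgebra ℚ 𝔸] [CompleteSpace 𝔸]

theorem exp_smul_one (μ : ℂ) : exp (μ • (1 : 𝔸)) = Complex.exp μ • (1 : 𝔸) := by
  rw [← Algebra.algebraMap_eq_smul_one, ← algebraMap_exp_comm, ← Complex.exp_eq_exp_ℂ,
    Algebra.algebraMap_eq_smul_one]

theorem eigen_pow (A B : 𝔸) (μ : ℂ) (h : A * B = B * A + μ • B) :
    ∀ n : ℕ, A ^ n * B = B * (A + μ • (1 : 𝔸)) ^ n := by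
  intro n
  induction n with
  | zero => simp
  | succ n ih =>
    rw [pow_succ', mul_assoc, ih, ← mul_assoc, h, pow_succ', ← mul_assoc]
    congr 1
    rw [mul_add, mul_smul_comm, mul_one]

theorem exp_mul_eigen (A B : 𝔸) (μ : ℂ) (h : A * B = B * A + μ • B) :
    exp A * B = Complex.exp μ • (B * exp A) := by
  have h1 : exp A * B = ∑' n : ℕ, ((n.factorial⁻¹ : ℂ) • A ^ n) * B := by
    rw [exp_eq_tsum ℂ]
    exact ((expSeries_summable' (𝕂 := ℂ) A).tsum_mul_right B).symm
  rw [h1]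
  have h2 : ∀ n : ℕ, ((n.factorial⁻¹ : ℂ) • A ^ n) * B
      = B * ((n.factorial⁻¹ : ℂ) • (A + μ • (1:𝔸)) ^ n) := by
    intro n
    rw [smul_mul_assoc, eigen_pow A B μ h n, mul_smul_comm]
  rw [tsum_congr h2, (expSeries_summable' (𝕂 := ℂ) (A + μ • (1:𝔸))).tsum_mul_left B]
  have h3 : (∑' n : ℕ, (n.factorial⁻¹ : ℂ) • (A + μ • (1:𝔸)) ^ n) = exp (A + μ • (1:𝔸)) := by
    rw [exp_eq_tsum ℂ]
  rw [h3, exp_add_of_commute (Commute.smul_right (Commute.one_right A) μ),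
    exp_smul_one, mul_smul_comm, mul_one, mul_smul_comm]


theorem shift_pow (A Q R : 𝔸) (h : A * Q = Q * A + R) (hc : Q * R = R * Q) :
    ∀ n : ℕ, A * Q ^ (n + 1) = Q ^ (n + 1) * A + ((n : ℂ) + 1) • (Q ^ n * R) := by
  intro n
  induction n with
  | zero => simpa using h
  | succ n ih =>
    have e1 : A * Q ^ (n + 2) = (A * Q ^ (n + 1)) * Q := by
      rw [pow_succ, ← mul_assoc]
    rw [e1, ih, add_mul, smul_mul_assoc, mul_assoc (Q ^ (n+1)), h, mul_assoc (Q ^ n), ← hc,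
      ← mul_assoc (Q ^ n), ← pow_succ, mul_add, ← mul_assoc, ← pow_succ]
    push_cast
    have e2 : ((n:ℂ) + 1 + 1) • (Q ^ (n+1) * R) = Q ^ (n+1) * R + ((n:ℂ) + 1) • (Q ^ (n+1) * R) := by
      rw [add_smul, one_smul, add_comm]
    rw [e2, ← add_assoc]

theorem mul_exp_shift (A Q R : 𝔸) (h : A * Q = Q * A + R) (hc : Q * R = R * Q) :
    A * exp Q = exp Q * A + exp Q * R := by
  have hf : HasSum (fun n : ℕ => ((n.factorial⁻¹ : ℂ) • Q ^ n) * A) (exp Q * A) :=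
    (exp_series_hasSum_exp' (𝕂 := ℂ) Q).mul_right A
  set g : ℕ → 𝔸 := fun n => (n.factorial⁻¹ : ℂ) • (A * Q ^ n) - ((n.factorial⁻¹ : ℂ) • Q ^ n) * A
    with hg
  have hg0 : g 0 = 0 := by simp [hg]
  have hgsucc : ∀ n : ℕ, g (n + 1) = ((n.factorial⁻¹ : ℂ) • Q ^ n) * R := by
    intro n
    have hfac : (((n+1).factorial : ℂ))⁻¹ * ((n : ℂ) + 1) = (n.factorial : ℂ)⁻¹ := by
      rw [Nat.factorial_succ]
      push_cast
      rw [mul_inv]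
      have hn : ((n:ℂ) + 1) ≠ 0 := by
        exact_mod_cast Nat.cast_add_one_ne_zero (R := ℂ) n
      have hfn : ((n.factorial : ℂ)) ≠ 0 := Nat.cast_ne_zero.mpr n.factorial_ne_zero
      field_simp
    rw [hg]
    simp only
    rw [shift_pow A Q R h hc n, smul_mul_assoc, smul_add, add_sub_cancel_left, smul_smul, hfac,
      smul_mul_assoc]
  have hgsum : HasSum g (exp Q * R) := by
    have h1 : HasSum (fun n : ℕ => g (n + 1)) (exp Q * R) := by
      have := (exp_series_hasSum_exp' (𝕂 := ℂ) Q).mul_right R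
      exact this.congr_fun fun n => hgsucc n
    refine (hasSum_nat_add_iff' 1).mp ?_
    simpa [hg0] using h1
  have hsum : HasSum (fun n : ℕ => (n.factorial⁻¹ : ℂ) • (A * Q ^ n))
      (exp Q * A + exp Q * R) := by
    have := hf.add hgsum
    refine this.congr_fun fun n => ?_
    simp [hg]
  have hmul : A * exp Q = ∑' n : ℕ, (n.factorial⁻¹ : ℂ) • (A * Q ^ n) := by
    rw [exp_eq_tsum ℂ]
    rw [← (expSeries_summable' (𝕂 := ℂ) Q).tsum_mul_left A]
    exact tsum_congr fun n => by rw [mul_smul_comm]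
  rw [hmul, hsum.tsum_eq]

theorem mul_exp_shift' (A Q R : 𝔸) (h : A * Q = Q * A + R) (hc : Q * R = R * Q) :
    A * exp Q = exp Q * (A + R) := by
  rw [mul_exp_shift A Q R h hc, mul_add]

/-- exp Q as a unit. -/
noncomputable def expUnit (Q : 𝔸) : 𝔸ˣ where
  val := exp Q
  inv := exp (-Q)
  val_inv := by rw [← exp_add_of_commute (Commute.neg_right (Commute.refl Q))]; simp
  inv_val := by rw [← exp_add_of_commute (Commute.neg_left (Commute.refl Q))]; simp

@[simp] theorem expUnit_val (Q : 𝔸) : (expUnit Q : 𝔸) = exp Q := rfl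
@[simp] theorem expUnit_inv (Q : 𝔸) : ((expUnit Q)⁻¹ : 𝔸ˣ) = (exp (-Q) : 𝔸) := rfl

theorem exp_mul_exp_neg (Q : 𝔸) : exp Q * exp (-Q) = 1 := (expUnit Q).val_inv
theorem exp_neg_mul_exp (Q : 𝔸) : exp (-Q) * exp Q = 1 := (expUnit Q).inv_val

/-- Conjugating `exp (s • B)` by `exp A'` when `B` is an `ad`-eigenvector of `A'`. -/
theorem exp_mul_exp_smul (A' B : 𝔸) (μ s : ℂ) (h : A' * B = B * A' + μ • B) :
    exp A' * exp (s • B) = exp ((s * Complex.exp μ) • B) * exp A' := by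
  have hconj : exp A' * (s • B) * exp (-A') = (s * Complex.exp μ) • B := by
    rw [mul_smul_comm, smul_mul_assoc, exp_mul_eigen A' B μ h, smul_mul_assoc, mul_assoc,
      exp_mul_exp_neg, mul_one, smul_smul, mul_comm s]
  have := exp_units_conj (expUnit A') (s • B)
  simp only [expUnit_val, expUnit_inv] at this
  rw [hconj] at this
  calc exp A' * exp (s • B)
      = (exp A' * exp (s • B) * exp (-A')) * exp A' := by
        rw [mul_assoc, mul_assoc, exp_neg_mul_exp, mul_one]
    _ = exp ((s * Complex.exp μ) • B) * exp A' := by rw [← this]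


/-- Baker–Campbell–Hausdorff in the case of a central commutator:
if `[A,B] = C` commutes with `A` and `B`, then `exp (A+B) = exp (B + C/2) * exp A`. -/
theorem exp_add_of_central (A B C : 𝔸) (h : A * B = B * A + C)
    (hAC : A * C = C * A) (hBC : B * C = C * B) :
    exp (A + B) = exp (B + (2⁻¹ : ℂ) • C) * exp A := by
  set G : ℂ → 𝔸 := fun t => exp (t • B) * exp ((t ^ 2 / 2) • C) * exp (t • A) with hGdef
  have hG : ∀ t : ℂ, HasDerivAt G ((A + B) * G t) t := by
    intro t
    have h1 : HasDerivAt (fun u : ℂ => exp (u • B)) (B * exp (t • B)) t :=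
      hasDerivAt_exp_smul_const' B t
    have hv : HasDerivAt (fun u : ℂ => u ^ 2 / 2) t t := by
      have := (hasDerivAt_pow 2 t).div_const 2
      simpa using this
    have h2 : HasDerivAt (fun u : ℂ => exp ((u ^ 2 / 2) • C))
        (t • (C * exp ((t ^ 2 / 2) • C))) t := by
      have := HasDerivAt.scomp (𝕜 := ℂ) t (hasDerivAt_exp_smul_const' C (t ^ 2 / 2)) hv
      exact this
    have h3 : HasDerivAt (fun u : ℂ => exp (u • A)) (A * exp (t • A)) t :=
      hasDerivAt_exp_smul_const' A t
    have hd := (h1.mul h2).mul h3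
    set e1 := exp (t • B)
    set e2 := exp ((t ^ 2 / 2) • C)
    set e3 := exp (t • A)
    -- commutation facts
    have cBC : Commute B C := hBC
    have cAC : Commute A C := hAC
    have cCe1 : C * e1 = e1 * C := ((cBC.symm.smul_right t).exp_right).eq
    have cAe2 : A * e2 = e2 * A := ((cAC.smul_right (t ^ 2 / 2)).exp_right).eq
    have e1A : e1 * A = A * e1 - (t • C) * e1 := by
      have hs : A * (t • B) = (t • B) * A + t • C := by
        rw [mul_smul_comm, smul_mul_assoc, h, smul_add]
      have hcs : (t • B) * (t • C) = (t • C) * (t • B) := ((cBC.smul_left t).smul_right t).eq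
      have h5 := mul_exp_shift A (t • B) (t • C) hs hcs
      have h4 : exp (t • B) * (t • C) = (t • C) * exp (t • B) := by
        rw [mul_smul_comm, ← cCe1, smul_mul_assoc]
      rw [h4] at h5
      rw [eq_sub_iff_add_eq]
      exact h5.symm
    -- now rewrite the derivative
    have m1 : e1 * t • (C * e2) = t • C * e1 * e2 := by
      rw [mul_smul_comm, ← mul_assoc, ← cCe1, ← smul_mul_assoc, ← smul_mul_assoc]
    have m2 : e1 * e2 * (A * e3) = (A * e1 - t • C * e1) * e2 * e3 := by
      rw [← e1A, mul_assoc e1, ← mul_assoc e2, ← cAe2, mul_assoc, mul_assoc, mul_assoc]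
    have key : (B * e1 * e2 + e1 * t • (C * e2)) * e3 + e1 * e2 * (A * e3)
        = (A + B) * (e1 * e2 * e3) := by
      rw [m1, m2]
      noncomm_ring
    exact key ▸ hd
  have cBC : Commute B C := hBC
  have hH : ∀ t : ℂ, HasDerivAt (fun u => exp (u • (-(A + B))) * G u) 0 t := by
    intro t
    have h0 : HasDerivAt (fun u : ℂ => exp (u • (-(A + B))))
        ((-(A + B)) * exp (t • (-(A + B)))) t := hasDerivAt_exp_smul_const' _ t
    have hd := h0.mul (hG t)
    have hcomm : Commute (A + B) (exp (t • (-(A + B)))) :=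
      (((Commute.refl (A + B)).neg_right).smul_right t).exp_right
    have key : (-(A + B)) * exp (t • (-(A + B))) * G t
        + exp (t • (-(A + B))) * ((A + B) * G t) = 0 := by
      have h2 : exp (t • (-(A + B))) * ((A + B) * G t)
          = (A + B) * (exp (t • (-(A + B))) * G t) := by
        rw [← mul_assoc, ← hcomm.eq, mul_assoc]
      rw [h2, neg_mul, neg_mul, mul_assoc, neg_add_cancel]
    exact key ▸ hd
  have hconst := is_const_of_deriv_eq_zero (𝕜 := ℂ)
    (fun u => (hH u).differentiableAt) (fun u => (hH u).deriv) 1 0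
  have hH0 : exp ((0:ℂ) • (-(A + B))) * G 0 = 1 := by
    simp [hGdef, exp_zero]
  have hH1 : exp (-(A + B)) * G 1 = 1 := by
    have := hconst.trans hH0
    simpa using this
  have hG1 : exp (A + B) = G 1 := by
    calc exp (A + B) = exp (A + B) * (exp (-(A + B)) * G 1) := by rw [hH1, mul_one]
    _ = G 1 := by rw [← mul_assoc, exp_mul_exp_neg, one_mul]
  rw [hG1, hGdef]
  simp only [one_smul, one_pow]
  rw [show ((1:ℂ) / 2) = (2⁻¹ : ℂ) by norm_num,
    ← exp_add_of_commute (cBC.smul_right (2⁻¹ : ℂ))]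


/-- The scalar series identity: `f₃(b²)·b = e^{b/2} - e^{-b/2}`. -/
theorem f3_key (b : ℂ) :
    (∑' k : ℕ, (b ^ 2) ^ k / (4 ^ k * ((2 * k + 1).factorial : ℂ))) * b
      = Complex.exp (b / 2) - Complex.exp (-(b / 2)) := by
  have hT : HasSum (fun n : ℕ => (b/2) ^ n / (n.factorial : ℂ) - (-(b/2)) ^ n / (n.factorial : ℂ))
      (Complex.exp (b/2) - Complex.exp (-(b/2))) := by
    rw [Complex.exp_eq_exp_ℂ]
    exact (expSeries_div_hasSum_exp (b/2)).sub (expSeries_div_hasSum_exp (-(b/2)))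
  set g := fun n : ℕ => (b/2) ^ n / (n.factorial : ℂ) - (-(b/2)) ^ n / (n.factorial : ℂ)
    with hgdef
  have heven : ∀ k : ℕ, g (2 * k) = 0 := by
    intro k
    simp only [hgdef, Even.neg_pow (even_two_mul k), sub_self]
  have hodd : ∀ k : ℕ,
      g (2 * k + 1) = (b ^ 2) ^ k / (4 ^ k * (((2 * k + 1).factorial : ℂ))) * b := by
    intro k
    have hne1 : ((2 * k + 1).factorial : ℂ) ≠ 0 := Nat.cast_ne_zero.mpr (Nat.factorial_ne_zero _)
    have hne2 : (4 : ℂ) ^ k ≠ 0 := pow_ne_zero _ (by norm_num)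
    have e1 : (b / 2) ^ (2 * k + 1) = b ^ (2 * k + 1) / 2 ^ (2 * k + 1) := div_pow b 2 _
    have e2 : ((b : ℂ) ^ 2) ^ k = b ^ (2 * k) := (pow_mul b 2 k).symm
    have e3 : (2 : ℂ) ^ (2 * k + 1) = 2 * 4 ^ k := by
      rw [pow_succ, pow_mul]
      norm_num [mul_comm]
    have e4 : (b : ℂ) ^ (2 * k + 1) = b ^ (2 * k) * b := pow_succ b _
    simp only [hgdef, Odd.neg_pow (odd_two_mul_add_one k), e1, e2, e3, e4]
    field_simp
    ring
  have hgsum : Summable g := hT.summable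
  have hE : HasSum (fun k : ℕ => g (2 * k)) 0 := by
    have : (fun k : ℕ => g (2 * k)) = fun _ => (0 : ℂ) := funext heven
    rw [this]
    exact hasSum_zero
  have hO : HasSum (fun k : ℕ => g (2 * k + 1)) (∑' k : ℕ, g (2 * k + 1)) :=
    (hgsum.comp_injective (fun i j hij => by simp only [] at hij; omega : Function.Injective fun k : ℕ => 2 * k + 1)).hasSum
  have huniq := hT.unique (hE.even_add_odd hO)
  rw [huniq, zero_add, ← tsum_mul_right]
  exact tsum_congr fun k => (hodd k).symm


theorem exp_mul_exp_smul_comm {P M : 𝔸} (hPM : Commute P M) (p q : ℂ) :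
    exp (p • P) * exp (q • M) = exp (p • P + q • M) :=
  (exp_add_of_commute ((hPM.smul_left p).smul_right q)).symm

theorem exp_comb {P M : 𝔸} (hPM : Commute P M) (p₁ q₁ p₂ q₂ : ℂ) :
    exp (p₁ • P + q₁ • M) * exp (p₂ • P + q₂ • M)
      = exp ((p₁ + p₂) • P + (q₁ + q₂) • M) := by
  have c11 : Commute (p₁ • P) (p₂ • P) := ((Commute.refl P).smul_left _).smul_right _
  have c12 : Commute (p₁ • P) (q₂ • M) := (hPM.smul_left _).smul_right _
  have c21 : Commute (q₁ • M) (p₂ • P) := (hPM.symm.smul_left _).smul_right _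
  have c22 : Commute (q₁ • M) (q₂ • M) := ((Commute.refl M).smul_left _).smul_right _
  rw [← exp_add_of_commute ((c11.add_right c12).add_left (c21.add_right c22))]
  congr 1
  module

/-- The main theorem, in an arbitrary complete normed `ℂ`-algebra. -/
theorem main_thm (X Y Z : 𝔸) (a : ℂ)
    (h1 : X * Y - Y * X = Z) (h2 : X * Z - Z * X = a • Y) (h3 : Y * Z - Z * Y = 0)
    (f₃ : ℂ) (hf₃ : f₃ = ∑' k : ℕ, a ^ k / (4 ^ k * ((2 * k + 1).factorial : ℂ))) :
    exp (X + Y) = exp ((1 / 2 : ℂ) • X) * exp (f₃ • Y) * exp ((1 / 2 : ℂ) • X) := by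
  have hxy : X * Y = Y * X + Z := by rw [← h1]; abel
  have hyx : Y * X = X * Y - Z := by rw [← h1]; abel
  have hYZ : Y * Z = Z * Y := by rw [← sub_eq_zero]; exact h3
  rcases eq_or_ne a 0 with rfl | ha
  · -- degenerate (Heisenberg) case
    have hXZ : X * Z = Z * X := by
      rw [← sub_eq_zero, h2, zero_smul]
    have hf1 : f₃ = 1 := by
      rw [hf₃, tsum_eq_single 0 (fun k hk => by simp [zero_pow hk])]
      norm_num
    rw [hf1, one_smul]
    have hcentral := exp_add_of_central X Y Z hxy hXZ hYZ
    set E := exp ((1 / 2 : ℂ) • X) with hEdef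
    set N := exp (-((1 / 2 : ℂ) • X)) with hNdef
    have hQ : Y * N = N * (Y + (2⁻¹ : ℂ) • Z) := by
      refine mul_exp_shift' Y (-((1 / 2 : ℂ) • X)) ((2⁻¹ : ℂ) • Z) ?_ ?_
      · rw [mul_neg, neg_mul, mul_smul_comm, smul_mul_assoc, hyx]
        module
      · rw [neg_mul, mul_neg, smul_mul_assoc, smul_mul_assoc, mul_smul_comm, mul_smul_comm, hXZ]
        module
    have hEYE : E * Y * N = Y + (2⁻¹ : ℂ) • Z := by
      rw [mul_assoc, hQ, ← mul_assoc, hEdef, hNdef, exp_mul_exp_neg, one_mul]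
    have hconj : E * exp Y * N = exp (Y + (2⁻¹ : ℂ) • Z) := by
      have h4 := exp_units_conj (expUnit ((1 / 2 : ℂ) • X)) Y
      simp only [expUnit_val, expUnit_inv] at h4
      rw [hEdef, hNdef, ← h4, hEYE]
    have hE2 : E * E = exp X := by
      rw [hEdef, ← exp_add_of_commute (Commute.refl _)]
      congr 1
      module
    calc exp (X + Y) = exp (Y + (2⁻¹ : ℂ) • Z) * exp X := hcentral
      _ = E * exp Y * N * (E * E) := by rw [← hconj, ← hE2]
      _ = E * exp Y * E := by
          rw [mul_assoc (E * exp Y), ← mul_assoc N, hNdef, hEdef, exp_neg_mul_exp, one_mul]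
  · -- generic case
    obtain ⟨b, hb⟩ := IsAlgClosed.exists_pow_nat_eq a (n := 2) (by norm_num)
    have hbne : b ≠ 0 := by
      intro h
      exact ha (by rw [← hb, h]; ring)
    set u : ℂ := b⁻¹ with hudef
    have hu : b * u = 1 := mul_inv_cancel₀ hbne
    have hu' : u * b = 1 := by rw [mul_comm]; exact hu
    have hua : u * a = b := by linear_combination (-u) * hb + b * hu
    have huua : u * u * a = 1 := by linear_combination u * hua + hu'
    set P : 𝔸 := Y + u • Z with hPdef
    set Mm : 𝔸 := Y - u • Z with hMdef
    have hxz : X * Z = Z * X + a • Y := by rw [← h2]; abel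
    -- ad-eigenvector relations
    have hXP : X * P = P * X + b • P := by
      rw [hPdef, mul_add, add_mul, mul_smul_comm, smul_mul_assoc, hxy, hxz, smul_add, smul_add,
        smul_smul, hua, smul_smul, hu, one_smul]
      abel
    have hXM : X * Mm = Mm * X + (-b) • Mm := by
      rw [hMdef, mul_sub, sub_mul, mul_smul_comm, smul_mul_assoc, hxy, hxz, smul_add, smul_sub,
        neg_smul, smul_smul, hua, smul_smul]
      have hbu : -b * u = -1 := by linear_combination (-1 : ℂ) * hu
      rw [hbu, neg_one_smul]
      abel
    -- commutation of P and Mm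
    have cYZ : Commute Y Z := hYZ
    have cPM : Commute P Mm := by
      have c1 : Commute Y (u • Z) := cYZ.smul_right u
      exact ((Commute.refl Y).add_left c1.symm).sub_right
        (c1.add_left (((Commute.refl Z).smul_left u).smul_right u))
    -- step 1 : conjugate X+Y to X
    set W : 𝔸 := (u * u) • Z with hWdef
    have hshift : X * exp W = exp W * (X + Y) := by
      refine mul_exp_shift' X W Y ?_ ?_
      · rw [hWdef, mul_smul_comm, smul_mul_assoc, hxz, smul_add, smul_smul, huua, one_smul]
      · rw [hWdef, smul_mul_assoc, mul_smul_comm, hYZ]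
    have hconj : X + Y = exp (-W) * X * exp W := by
      rw [mul_assoc, hshift, ← mul_assoc, exp_neg_mul_exp, one_mul]
    have step1 : exp (X + Y) = exp (-W) * exp X * exp W := by
      have h4 := exp_units_conj' (expUnit W) X
      simp only [expUnit_val, expUnit_inv] at h4
      rw [hconj, h4]
    -- scalars
    set eb2 := Complex.exp (b / 2) with heb2
    set emb2 := Complex.exp (-(b / 2)) with hemb2
    set eb := Complex.exp b with hebdef
    set emb := Complex.exp (-b) with hembdef
    have hkey : f₃ * b = eb2 - emb2 := by
      rw [hf₃, ← hb]
      exact f3_key b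
    have hee : eb2 * emb2 = 1 := by
      rw [heb2, hemb2, ← Complex.exp_add]
      norm_num
    have heb2sq : eb2 * eb2 = eb := by
      rw [heb2, hebdef, ← Complex.exp_add]
      norm_num
    have hemb2sq : emb2 * emb2 = emb := by
      rw [hemb2, hembdef, ← Complex.exp_add]
      congr 1
      ring
    have hf3e : f₃ = u * (eb2 - emb2) := by linear_combination u * hkey - f₃ * hu
    -- RHS computation
    set E := exp ((1 / 2 : ℂ) • X) with hEdef
    have hP2 : ((1 / 2 : ℂ) • X) * P = P * ((1 / 2 : ℂ) • X) + (b / 2) • P := by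
      rw [smul_mul_assoc, hXP, smul_add, mul_smul_comm, smul_smul]
      congr 2
      ring
    have hM2 : ((1 / 2 : ℂ) • X) * Mm = Mm * ((1 / 2 : ℂ) • X) + (-(b / 2)) • Mm := by
      rw [smul_mul_assoc, hXM, smul_add, mul_smul_comm, smul_smul]
      congr 2
      ring
    have rhs1 : exp (f₃ • Y) = exp ((f₃ / 2) • P) * exp ((f₃ / 2) • Mm) := by
      rw [exp_mul_exp_smul_comm cPM]
      congr 1
      rw [hPdef, hMdef]
      module
    have rhs2 : E * exp ((f₃ / 2) • P) = exp ((f₃ / 2 * eb2) • P) * E :=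
      exp_mul_exp_smul _ P (b / 2) (f₃ / 2) hP2
    have rhs3 : E * exp ((f₃ / 2) • Mm) = exp ((f₃ / 2 * emb2) • Mm) * E :=
      exp_mul_exp_smul _ Mm (-(b / 2)) (f₃ / 2) hM2
    have rhs4 : E * E = exp X := by
      rw [hEdef, ← exp_add_of_commute (Commute.refl _)]
      congr 1
      module
    have rhs : E * exp (f₃ • Y) * E
        = exp ((f₃ / 2 * eb2) • P + (f₃ / 2 * emb2) • Mm) * exp X := by
      rw [rhs1, ← mul_assoc, rhs2, mul_assoc (exp ((f₃ / 2 * eb2) • P)), rhs3, ← mul_assoc,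
        mul_assoc _ E E, rhs4, exp_mul_exp_smul_comm cPM]
    -- LHS computation
    have lhs1 : W = (u / 2) • P + (-(u / 2)) • Mm := by
      rw [hWdef, hPdef, hMdef]
      module
    have lhsP : exp X * exp ((u / 2) • P) = exp ((u / 2 * eb) • P) * exp X :=
      exp_mul_exp_smul X P b (u / 2) hXP
    have lhsM : exp X * exp ((-(u / 2)) • Mm)
        = exp ((-(u / 2) * emb) • Mm) * exp X :=
      exp_mul_exp_smul X Mm (-b) (-(u / 2)) hXM
    have eN : exp (-W) = exp ((-(u / 2)) • P + (u / 2) • Mm) := by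
      rw [lhs1]
      congr 1
      module
    have eW : exp W = exp ((u / 2) • P) * exp ((-(u / 2)) • Mm) := by
      rw [exp_mul_exp_smul_comm cPM, ← lhs1]
    have lhs2 : exp X * exp W
        = exp ((u / 2 * eb) • P + (-(u / 2) * emb) • Mm) * exp X := by
      rw [eW, ← mul_assoc, lhsP, mul_assoc, lhsM, ← mul_assoc, exp_mul_exp_smul_comm cPM]
    have lhs3 : exp (X + Y)
        = exp ((-(u / 2) + u / 2 * eb) • P + (u / 2 + -(u / 2) * emb) • Mm) * exp X := by
      rw [step1, mul_assoc, lhs2, eN, ← mul_assoc, exp_comb cPM]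
    have hs1 : -(u / 2) + u / 2 * eb = f₃ / 2 * eb2 := by
      linear_combination (-(eb2 / 2)) * hf3e + (-(u / 2)) * heb2sq + (u / 2) * hee
    have hs2 : u / 2 + -(u / 2) * emb = f₃ / 2 * emb2 := by
      linear_combination (-(emb2 / 2)) * hf3e + (u / 2) * hemb2sq + (-(u / 2)) * hee
    rw [lhs3, rhs, hs1, hs2]

end ZassAux

/-- Under the cyclic relations `[X,Y] = Z`, `[X,Z] = aY`, `[Y,Z] = 0`, the symmetric Zassenhaus
formula sums to `exp (X+Y) = e^{X/2} · exp (f₃(a) Y) · e^{X/2}` with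
`f₃(a) = Σ a^k/(4^k (2k+1)!)`. -/
theorem exp_add_symmetric_of_cyclic_relations (m : ℕ) (X Y Z : Matrix (Fin m) (Fin m) ℂ)
    (a : ℂ) (h1 : ⁅X, Y⁆ = Z) (h2 : ⁅X, Z⁆ = a • Y) (h3 : ⁅Y, Z⁆ = 0)
    (f₃ : ℂ) (hf₃ : f₃ = ∑' k : ℕ, a ^ k / (4 ^ k * ((2 * k + 1).factorial : ℂ))) :
    NormedSpace.exp (X + Y) =
      NormedSpace.exp ((1 / 2 : ℂ) • X) * NormedSpace.exp (f₃ • Y) *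
        NormedSpace.exp ((1 / 2 : ℂ) • X) := by
  rw [Ring.lie_def] at h1 h2 h3
  letI : SeminormedRing (Matrix (Fin m) (Fin m) ℂ) := Matrix.linftyOpSemiNormedRing
  letI : NormedRing (Matrix (Fin m) (Fin m) ℂ) := Matrix.linftyOpNormedRing
  letI : NormedAlgebra ℂ (Matrix (Fin m) (Fin m) ℂ) := Matrix.linftyOpNormedAlgebra
  letI : NormedAlgebra ℚ (Matrix (Fin m) (Fin m) ℂ) := NormedAlgebra.restrictScalars ℚ ℂ _
  exact ZassAux.main_thm X Y Z a h1 h2 h3 f₃ hf₃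
end

section
/- Let α be a nonzero real number and define the 2×2 real matrices X = π·[[0, α], [−1/α, 0]] and Y = π·[[0, (10 + 4√6)α], [(−10 + 4√6)/α, 0]]. Then exp(X+Y) = exp(X)·exp(Y) = exp(Y)·exp(X), even though XY ≠ YX (i.e. [X,Y] ≠ 0). -/
open Real

lemma exp_smul_sq_neg_one {n : ℕ} (M : Matrix (Fin n) (Fin n) ℝ) (h : M * M = -1) (t : ℝ) :
    NormedSpace.exp (t • M) =
      Real.cos t • (1 : Matrix (Fin n) (Fin n) ℝ) + Real.sin t • M := by
  letI : SeminormedRing (Matrix (Fin n) (Fin n) ℝ) := Matrix.linftyOpSemiNormedRing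
  letI : NormedRing (Matrix (Fin n) (Fin n) ℝ) := Matrix.linftyOpNormedRing
  letI : NormedAlgebra ℝ (Matrix (Fin n) (Fin n) ℝ) := Matrix.linftyOpNormedAlgebra
  let φ : ℂ →ₐ[ℝ] Matrix (Fin n) (Fin n) ℝ := Complex.liftAux M h
  have hc : Continuous φ := φ.toLinearMap.continuous_of_finiteDimensional
  have h1 : φ ((t : ℂ) * Complex.I) = t • M := by
    simp [φ, Complex.liftAux_apply]
  have h2 := NormedSpace.map_exp φ hc ((t : ℂ) * Complex.I)
  rw [h1] at h2
  have h3 : NormedSpace.exp ((t : ℂ) * Complex.I) = Complex.exp (t * Complex.I) := by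
    rw [Complex.exp_eq_exp_ℂ]
  rw [h3, Complex.exp_mul_I] at h2
  have h4 : φ (Complex.cos t + Complex.sin t * Complex.I) =
      Real.cos t • (1 : Matrix (Fin n) (Fin n) ℝ) + Real.sin t • M := by
    simp [φ, Complex.liftAux_apply, Algebra.algebraMap_eq_smul_one, Complex.cos_ofReal_re, Complex.sin_ofReal_re]
  calc NormedSpace.exp (t • M) = φ (Complex.cos t + Complex.sin t * Complex.I) := h2.symm
    _ = Real.cos t • (1 : Matrix (Fin n) (Fin n) ℝ) + Real.sin t • M := h4

/-- Fréchet's example: with `X = π·[[0, α], [−1/α, 0]]` and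
`Y = π·[[0, (10+4√6)α], [(−10+4√6)/α, 0]]`, one has
`exp (X+Y) = exp X · exp Y = exp Y · exp X` even though `X` and `Y` do not commute. -/
theorem exp_add_eq_exp_mul_exp_of_noncommuting (α : ℝ) (hα : α ≠ 0)
    (X Y : Matrix (Fin 2) (Fin 2) ℝ)
    (hX : X = π • !![0, α; -1 / α, 0])
    (hY : Y = π • !![0, (10 + 4 * Real.sqrt 6) * α; (-10 + 4 * Real.sqrt 6) / α, 0]) :
    NormedSpace.exp (X + Y) = NormedSpace.exp X * NormedSpace.exp Y ∧
      NormedSpace.exp (X + Y) = NormedSpace.exp Y * NormedSpace.exp X ∧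
      X * Y ≠ Y * X := by
  have hs6 : Real.sqrt 6 * Real.sqrt 6 = 6 := Real.mul_self_sqrt (by norm_num)
  have hs6pos : 0 < Real.sqrt 6 := Real.sqrt_pos.mpr (by norm_num)
  -- exp X
  have hM1 : (!![0, α; -1 / α, 0] : Matrix (Fin 2) (Fin 2) ℝ) *
      !![0, α; -1 / α, 0] = -1 := by
    ext i j
    fin_cases i <;> fin_cases j <;>
      simp [Matrix.mul_apply, Fin.sum_univ_two, Matrix.one_apply] <;> field_simp
  have heX : NormedSpace.exp X = -1 := by
    rw [hX, exp_smul_sq_neg_one _ hM1, Real.cos_pi, Real.sin_pi]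
    simp
  -- exp Y
  have hM2 : ((2:ℝ)⁻¹ • !![0, (10 + 4 * Real.sqrt 6) * α; (-10 + 4 * Real.sqrt 6) / α, 0] :
      Matrix (Fin 2) (Fin 2) ℝ) *
      ((2:ℝ)⁻¹ • !![0, (10 + 4 * Real.sqrt 6) * α; (-10 + 4 * Real.sqrt 6) / α, 0]) = -1 := by
    ext i j
    fin_cases i <;> fin_cases j <;>
      simp [Matrix.mul_apply, Fin.sum_univ_two, Matrix.one_apply] <;>
      field_simp <;> linear_combination 16 * hs6
  have hYeq : Y = (2 * π) •
      ((2:ℝ)⁻¹ • !![0, (10 + 4 * Real.sqrt 6) * α; (-10 + 4 * Real.sqrt 6) / α, 0]) := by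
    rw [hY, smul_smul, show (2 * π) * (2:ℝ)⁻¹ = π by ring]
  have heY : NormedSpace.exp Y = 1 := by
    rw [hYeq, exp_smul_sq_neg_one _ hM2, Real.cos_two_pi, Real.sin_two_pi]
    simp
  -- exp (X + Y)
  have hM3 : ((5:ℝ)⁻¹ • !![0, (11 + 4 * Real.sqrt 6) * α; (-11 + 4 * Real.sqrt 6) / α, 0] :
      Matrix (Fin 2) (Fin 2) ℝ) *
      ((5:ℝ)⁻¹ • !![0, (11 + 4 * Real.sqrt 6) * α; (-11 + 4 * Real.sqrt 6) / α, 0]) = -1 := by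
    ext i j
    fin_cases i <;> fin_cases j <;>
      simp [Matrix.mul_apply, Fin.sum_univ_two, Matrix.one_apply] <;>
      field_simp <;> linear_combination 16 * hs6
  have hsum : (!![0, α; -1 / α, 0] : Matrix (Fin 2) (Fin 2) ℝ) +
      !![0, (10 + 4 * Real.sqrt 6) * α; (-10 + 4 * Real.sqrt 6) / α, 0] =
      !![0, (11 + 4 * Real.sqrt 6) * α; (-11 + 4 * Real.sqrt 6) / α, 0] := by
    ext i j
    fin_cases i <;> fin_cases j <;> simp <;> ring
  have hXY : X + Y = (5 * π) •
      ((5:ℝ)⁻¹ • !![0, (11 + 4 * Real.sqrt 6) * α; (-11 + 4 * Real.sqrt 6) / α, 0]) := by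
    rw [hX, hY, ← smul_add, hsum, smul_smul, show (5 * π) * (5:ℝ)⁻¹ = π by ring]
  have hcos5 : Real.cos (5 * π) = -1 := by
    rw [show (5:ℝ) * π = π + 2 * π + 2 * π by ring, Real.cos_add_two_pi, Real.cos_add_two_pi,
      Real.cos_pi]
  have hsin5 : Real.sin (5 * π) = 0 := by
    rw [show (5:ℝ) * π = π + 2 * π + 2 * π by ring, Real.sin_add_two_pi, Real.sin_add_two_pi,
      Real.sin_pi]
  have heXY : NormedSpace.exp (X + Y) = -1 := by
    rw [hXY, exp_smul_sq_neg_one _ hM3, hcos5, hsin5]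
    simp
  refine ⟨by rw [heXY, heX, heY, mul_one], by rw [heXY, heX, heY, one_mul], ?_⟩
  intro h
  have h00 : (X * Y) 0 0 = (Y * X) 0 0 := by rw [h]
  rw [hX, hY] at h00
  simp [Matrix.mul_apply, Fin.sum_univ_two] at h00
  field_simp at h00
  have h8 : π * π * α * Real.sqrt 6 = 0 := by linear_combination (π * π * α / 8) * h00
  exact mul_ne_zero (mul_ne_zero (mul_ne_zero Real.pi_ne_zero Real.pi_ne_zero) hα)
    (ne_of_gt hs6pos) h8
end
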